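/- The polynomial p(x₁,x₂,u₁,u₂) = u₁²u₂² + x₁²x₂u₂ + x₁x₂²u₁ - 3x₁x₂u₁u₂ cannot be written in the form ∑_{ν∈{0,1}², μ∈{0,1}²} x₁^{ν₁}x₂^{ν₂}u₁^{μ₁}u₂^{μ₂} σ_{ν,μ}(x,u) with all σ_{ν,μ} sums of squares of polynomials. -/

import Mathlib

noncomputable section MotzkinAux
open Polynomial



/-- Sum of squares as a list sum. -/
theorem isSumSq_exists_list {R : Type*} [AddCommMonoid R] [Mul R] {s : R} (h : IsSumSq s) :
    ∃ L : List R, s = (L.map fun a => a * a).sum := by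
  induction h with
  | zero => exact ⟨[], rfl⟩
  | @sq_add a S _ ih =>
    obtain ⟨L, hL⟩ := ih
    exact ⟨a :: L, by simp [hL]⟩

theorem IsSumSq.ringHom_map {R S : Type*} [CommRing R] [CommRing S] (f : R →+* S) {s : R}
    (h : IsSumSq s) : IsSumSq (f s) := by
  induction h with
  | zero => simpa using IsSumSq.zero
  | @sq_add a S _ ih => simpa [map_add, map_mul] using IsSumSq.sq_add (f a) ih

theorem IsSumSq.square_mul {R : Type*} [CommRing R] {a s : R} (ha : IsSquare a)
    (h : IsSumSq s) : IsSumSq (a * s) := by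
  obtain ⟨r, rfl⟩ := ha
  induction h with
  | zero => simpa using IsSumSq.zero
  | @sq_add b S _ ih =>
    have : r * r * (b * b + S) = (r * b) * (r * b) + r * r * S := by ring
    rw [this]
    exact IsSumSq.sq_add _ ih

/-- list of real squares summing to zero -/
theorem list_sq_sum_eq_zero {α : Type*} {L : List α} {f : α → ℝ}
    (h : (L.map fun a => f a * f a).sum = 0) : ∀ a ∈ L, f a = 0 := by
  induction L with
  | nil => simp
  | cons b t ih =>
    simp only [List.map_cons, List.sum_cons] at h
    have hb : f b * f b ≥ 0 := mul_self_nonneg _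
    have ht : (t.map fun a => f a * f a).sum ≥ 0 := by
      apply List.sum_nonneg
      intro x hx
      simp only [List.mem_map] at hx
      obtain ⟨a, _, rfl⟩ := hx
      exact mul_self_nonneg _
    have h1 : f b * f b = 0 := by linarith
    have h2 : (t.map fun a => f a * f a).sum = 0 := by linarith
    intro a ha
    rcases List.mem_cons.mp ha with rfl | ha
    · exact mul_self_eq_zero.mp h1
    · exact ih h2 a ha




def EE (s t : ℝ) : Polynomial (Polynomial ℝ) →+* ℝ :=
  (Polynomial.evalRingHom t).comp (Polynomial.mapRingHom (Polynomial.evalRingHom s))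

theorem eq_zero_of_forall_EE {p : Polynomial (Polynomial ℝ)}
    (h : ∀ s t, EE s t p = 0) : p = 0 := by
  have h1 : ∀ s : ℝ, Polynomial.map (Polynomial.evalRingHom s) p = 0 := by
    intro s
    apply Polynomial.funext
    intro t
    simpa [EE] using h s t
  ext j i
  have h2 : ∀ s : ℝ, Polynomial.eval s (p.coeff j) = 0 := by
    intro s
    have := congrArg (fun q => Polynomial.coeff q j) (h1 s)
    simpa [Polynomial.coeff_map] using this
  have : p.coeff j = 0 := Polynomial.funext (by simpa using h2)
  simp [this]

theorem formally_real_list {L : List (Polynomial (Polynomial ℝ))}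
    (h : (L.map fun p => p * p).sum = 0) : ∀ p ∈ L, p = 0 := by
  intro p hp
  apply eq_zero_of_forall_EE
  intro s t
  have := congrArg (EE s t) h
  rw [map_list_sum, List.map_map] at this
  simp only [Function.comp_def, map_mul, map_zero] at this
  have := list_sq_sum_eq_zero (f := fun q => EE s t q) (by simpa using this) p hp
  exact this




def cc (i j : ℕ) : Polynomial (Polynomial ℝ) →+ ℝ :=
  AddMonoidHom.mk' (fun p => (p.coeff j).coeff i) (by intro p q; simp)

@[simp] theorem cc_apply (i j : ℕ) (p : Polynomial (Polynomial ℝ)) :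
    cc i j p = (p.coeff j).coeff i := rfl

theorem cc_mul (i j : ℕ) (p q : Polynomial (Polynomial ℝ)) :
    cc i j (p * q) = ∑ j1 ∈ Finset.range (j + 1), ∑ i1 ∈ Finset.range (i + 1),
      cc i1 j1 p * cc (i - i1) (j - j1) q := by
  simp only [cc_apply, Polynomial.coeff_mul, Finset.Nat.sum_antidiagonal_eq_sum_range_succ_mk]
  rw [Polynomial.finset_sum_coeff]
  refine Finset.sum_congr rfl fun j1 _ => ?_
  simp [Polynomial.coeff_mul, Finset.Nat.sum_antidiagonal_eq_sum_range_succ_mk]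

theorem cc_ext {p : Polynomial (Polynomial ℝ)} (h : ∀ i j, cc i j p = 0) : p = 0 := by
  ext j i
  simpa using h i j

/-- combined total degree on ℝ[X][Y] -/
def td (p : Polynomial (Polynomial ℝ)) : ℕ :=
  p.support.sup (fun j => (p.coeff j).natDegree + j)

theorem cc_eq_zero_of_td_lt {p : Polynomial (Polynomial ℝ)} {i j : ℕ}
    (h : td p < i + j) : cc i j p = 0 := by
  by_cases hj : j ∈ p.support
  · have h1 : (p.coeff j).natDegree + j ≤ td p := Finset.le_sup (f := fun j => (p.coeff j).natDegree + j) hj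
    have : (p.coeff j).natDegree < i := by omega
    simpa using Polynomial.coeff_eq_zero_of_natDegree_lt this
  · simp only [Polynomial.mem_support_iff, not_not] at hj
    simp [hj]

theorem td_zero : td 0 = 0 := by simp [td]

theorem exists_top {p : Polynomial (Polynomial ℝ)} (hp : p ≠ 0) :
    ∃ i j, i + j = td p ∧ cc i j p ≠ 0 := by
  have hs : p.support.Nonempty := Polynomial.support_nonempty.mpr hp
  obtain ⟨j, hj, hje⟩ := Finset.exists_mem_eq_sup p.support hs
    (fun j => (p.coeff j).natDegree + j)
  refine ⟨(p.coeff j).natDegree, j, hje.symm, ?_⟩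
  have : p.coeff j ≠ 0 := Polynomial.mem_support_iff.mp hj
  simpa using Polynomial.leadingCoeff_ne_zero.mpr this

theorem le_foldr_max (l : List ℕ) : ∀ x ∈ l, x ≤ l.foldr max 0 := by
  induction l with
  | nil => simp
  | cons a t ih =>
    intro x hx
    rcases List.mem_cons.mp hx with rfl | hx
    · exact le_max_left _ _
    · exact le_trans (ih x hx) (le_max_right _ _)

theorem foldr_max_mem (l : List ℕ) : l.foldr max 0 = 0 ∨ l.foldr max 0 ∈ l := by
  induction l with
  | nil => left; rfl
  | cons a t ih =>
    simp only [List.foldr_cons]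
    rcases le_total a (t.foldr max 0) with h | h
    · rw [max_eq_right h]
      rcases ih with h0 | hmem
      · left; exact h0
      · right; exact List.mem_cons_of_mem _ hmem
    · rw [max_eq_left h]
      right; exact List.mem_cons_self

/-- The Motzkin polynomial in ℝ[X][Y]: 1 + x⁴y² + x²y⁴ - 3x²y². -/
def Mz : Polynomial (Polynomial ℝ) :=
  1 + Polynomial.C (Polynomial.X ^ 4) * Polynomial.X ^ 2
    + Polynomial.C (Polynomial.X ^ 2) * Polynomial.X ^ 4
    - 3 * (Polynomial.C (Polynomial.X ^ 2) * Polynomial.X ^ 2)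

theorem cc_Mz (i j : ℕ) : cc i j Mz =
    (if i = 0 ∧ j = 0 then 1 else 0) + (if i = 4 ∧ j = 2 then 1 else 0)
      + (if i = 2 ∧ j = 4 then 1 else 0) - (if i = 2 ∧ j = 2 then 3 else 0) := by
  have h3 : (3 : Polynomial (Polynomial ℝ)) = Polynomial.C (Polynomial.C 3) := by
    rw [map_ofNat, map_ofNat]
  simp only [cc_apply, Mz, Polynomial.coeff_add, Polynomial.coeff_sub, h3,
    Polynomial.coeff_C_mul, Polynomial.coeff_one, Polynomial.coeff_X_pow]
  rcases Nat.lt_or_ge j 5 with hj | hj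
  · interval_cases j <;>
      norm_num [Polynomial.coeff_X_pow, Polynomial.coeff_one, Polynomial.coeff_C]
  · have hj0 : j ≠ 0 := by omega
    have hj2 : j ≠ 2 := by omega
    have hj4 : j ≠ 4 := by omega
    norm_num [hj0, hj2, hj4, Ne.symm hj0, Ne.symm hj2, Ne.symm hj4]

/-- top homogeneous form of degree D -/
def topF (D : ℕ) (q : Polynomial (Polynomial ℝ)) : Polynomial (Polynomial ℝ) :=
  ∑ j ∈ Finset.range (D + 1),
    Polynomial.monomial j (Polynomial.monomial (D - j) (cc (D - j) j q))

theorem cc_topF (D : ℕ) (q : Polynomial (Polynomial ℝ)) (i j : ℕ) :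
    cc i j (topF D q) = if j ≤ D ∧ i = D - j then cc (D - j) j q else 0 := by
  simp only [cc_apply, topF, Polynomial.finset_sum_coeff, Polynomial.coeff_monomial,
    apply_ite (fun p => Polynomial.coeff p i), Polynomial.coeff_zero]
  rw [Finset.sum_ite_eq' (Finset.range (D + 1)) j]
  simp only [Finset.mem_range]
  split_ifs <;> first | rfl | (exfalso; omega)

theorem cc_topF_level {D : ℕ} {q : Polynomial (Polynomial ℝ)} {i j : ℕ} (h : i + j = D) :
    cc i j (topF D q) = cc i j q := by
  rw [cc_topF]
  have hj : j ≤ D := by omega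
  have hi : i = D - j := by omega
  simp [hj, hi]

theorem cc_topF_off {D : ℕ} {q : Polynomial (Polynomial ℝ)} {i j : ℕ} (h : i + j ≠ D) :
    cc i j (topF D q) = 0 := by
  rw [cc_topF]
  split_ifs with hc
  · exfalso; omega
  · rfl

theorem cc_topF_sq (D : ℕ) {q : Polynomial (Polynomial ℝ)} (hq : td q ≤ D) (i j : ℕ) :
    cc i j (topF D q * topF D q) = if i + j = 2 * D then cc i j (q * q) else 0 := by
  rw [cc_mul]
  by_cases hij : i + j = 2 * D
  · rw [if_pos hij, cc_mul]
    refine Finset.sum_congr rfl fun j1 hj1 => Finset.sum_congr rfl fun i1 hi1 => ?_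
    rw [Finset.mem_range] at hj1
    rw [Finset.mem_range] at hi1
    rcases Nat.lt_trichotomy (i1 + j1) D with h | h | h
    · -- first factors: topF off-level 0; rhs: second factor has level > D ≥ td q
      rw [cc_topF_off (by omega)]
      rw [cc_eq_zero_of_td_lt (p := q) (i := i - i1) (j := j - j1) (by omega)]
      ring
    · rw [cc_topF_level h, cc_topF_level (by omega)]
    · rw [cc_topF_off (by omega), cc_eq_zero_of_td_lt (p := q) (by omega)]
      ring
  · rw [if_neg hij]
    apply Finset.sum_eq_zero
    intro j1 hj1
    apply Finset.sum_eq_zero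
    intro i1 hi1
    rw [Finset.mem_range] at hj1
    rw [Finset.mem_range] at hi1
    by_cases h : i1 + j1 = D
    · rw [cc_topF_off (i := i - i1) (j := j - j1) (by omega)]
      ring
    · rw [cc_topF_off h]
      ring

theorem deg_bound {L : List (Polynomial (Polynomial ℝ))}
    (hL : (L.map fun p => p * p).sum = Mz) : ∀ q ∈ L, td q ≤ 3 := by
  set D := (L.map td).foldr max 0 with hD
  have hqD : ∀ q ∈ L, td q ≤ D := by
    intro q hq
    exact le_foldr_max _ _ (List.mem_map_of_mem (f := td) hq)
  suffices hD3 : D ≤ 3 by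
    intro q hq; exact le_trans (hqD q hq) hD3
  by_contra hD3
  push_neg at hD3
  have hD4 : 4 ≤ D := hD3
  -- the sum of squares of top forms is zero
  have hsum0 : ((L.map (topF D)).map fun p => p * p).sum = 0 := by
    apply cc_ext
    intro i j
    have h1 : cc i j (((L.map (topF D)).map fun p => p * p).sum)
        = ((L.map fun q => cc i j (topF D q * topF D q))).sum := by
      rw [map_list_sum]
      simp [List.map_map, Function.comp_def]
    rw [h1]
    by_cases hij : i + j = 2 * D
    · have h2 : ∀ q ∈ L, cc i j (topF D q * topF D q) = cc i j (q * q) := fun q hq => by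
        rw [cc_topF_sq D (hqD q hq), if_pos hij]
      rw [List.map_congr_left h2]
      have h3 : ((L.map fun q => cc i j (q * q))).sum = cc i j Mz := by
        rw [← hL, map_list_sum, List.map_map]
        simp [Function.comp_def]
      rw [h3, cc_Mz]
      have c1 : ¬ (i = 0 ∧ j = 0) := by omega
      have c2 : ¬ (i = 4 ∧ j = 2) := by omega
      have c3 : ¬ (i = 2 ∧ j = 4) := by omega
      have c4 : ¬ (i = 2 ∧ j = 2) := by omega
      simp [c1, c2, c3, c4]
    · have h2 : ∀ q ∈ L, cc i j (topF D q * topF D q) = 0 := fun q hq => by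
        rw [cc_topF_sq D (hqD q hq), if_neg hij]
      rw [List.map_congr_left h2]
      simp
  have htop0 : ∀ q ∈ L, topF D q = 0 := by
    intro q hq
    exact formally_real_list hsum0 _ (List.mem_map_of_mem hq)
  -- find q₀ attaining D
  have hmem : D = 0 ∨ D ∈ L.map td := foldr_max_mem _
  rcases hmem with h0 | hmem
  · omega
  · rw [List.mem_map] at hmem
    obtain ⟨q₀, hq₀L, hq₀⟩ := hmem
    have hq₀ne : q₀ ≠ 0 := by
      intro h; rw [h, td_zero] at hq₀; omega
    obtain ⟨i₀, j₀, hlev, hne⟩ := exists_top hq₀ne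
    rw [hq₀] at hlev
    have := cc_topF_level (q := q₀) hlev
    rw [htop0 q₀ hq₀L] at this
    simp only [map_zero] at this
    exact hne this.symm
theorem not_isSumSq_Mz : ¬ IsSumSq Mz := by
  intro h
  obtain ⟨L, hL⟩ := isSumSq_exists_list h
  have hdb : ∀ q ∈ L, ∀ i j : ℕ, 3 < i + j → cc i j q = 0 := by
    intro q hq i j hij
    exact cc_eq_zero_of_td_lt (lt_of_le_of_lt (deg_bound hL.symm q hq) hij)
  have key : ∀ i j : ℕ, (L.map fun q => cc i j (q * q)).sum = cc i j Mz := by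
    intro i j
    rw [hL, map_list_sum, List.map_map]
    simp [Function.comp_def]
  have step : ∀ a b : ℕ, (∀ q ∈ L, cc (2*a) (2*b) (q * q) = cc a b q * cc a b q) →
      cc (2*a) (2*b) Mz = 0 → ∀ q ∈ L, cc a b q = 0 := by
    intro a b hcomp hz q hq
    have hk := key (2*a) (2*b)
    rw [hz, List.map_congr_left hcomp] at hk
    exact list_sq_sum_eq_zero hk q hq
  -- (3,0) and (0,3)
  have h30 : ∀ q ∈ L, cc 3 0 q = 0 := by
    refine step 3 0 (fun q hq => ?_) (by rw [cc_Mz]; norm_num)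
    have z : ∀ i j : ℕ, 3 < i + j → (q.coeff j).coeff i = 0 := hdb q hq
    rw [cc_mul]
    norm_num [Finset.sum_range_succ, z]
  have h03 : ∀ q ∈ L, cc 0 3 q = 0 := by
    refine step 0 3 (fun q hq => ?_) (by rw [cc_Mz]; norm_num)
    have z : ∀ i j : ℕ, 3 < i + j → (q.coeff j).coeff i = 0 := hdb q hq
    rw [cc_mul]
    norm_num [Finset.sum_range_succ, z]
  -- (2,0) and (0,2)
  have h20 : ∀ q ∈ L, cc 2 0 q = 0 := by
    refine step 2 0 (fun q hq => ?_) (by rw [cc_Mz]; norm_num)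
    have z : ∀ i j : ℕ, 3 < i + j → (q.coeff j).coeff i = 0 := hdb q hq
    have z30 : (q.coeff 0).coeff 3 = 0 := h30 q hq
    rw [cc_mul]
    norm_num [Finset.sum_range_succ, z, z30]
  have h02 : ∀ q ∈ L, cc 0 2 q = 0 := by
    refine step 0 2 (fun q hq => ?_) (by rw [cc_Mz]; norm_num)
    have z : ∀ i j : ℕ, 3 < i + j → (q.coeff j).coeff i = 0 := hdb q hq
    have z03 : (q.coeff 3).coeff 0 = 0 := h03 q hq
    rw [cc_mul]
    norm_num [Finset.sum_range_succ, z, z03]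
  -- (1,0) and (0,1)
  have h10 : ∀ q ∈ L, cc 1 0 q = 0 := by
    refine step 1 0 (fun q hq => ?_) (by rw [cc_Mz]; norm_num)
    have z20 : (q.coeff 0).coeff 2 = 0 := h20 q hq
    rw [cc_mul]
    norm_num [Finset.sum_range_succ, z20]
  have h01 : ∀ q ∈ L, cc 0 1 q = 0 := by
    refine step 0 1 (fun q hq => ?_) (by rw [cc_Mz]; norm_num)
    have z02 : (q.coeff 2).coeff 0 = 0 := h02 q hq
    rw [cc_mul]
    norm_num [Finset.sum_range_succ, z02]
  -- final contradiction at (2,2)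
  have hfin : ∀ q ∈ L, cc 2 2 (q * q) = cc 1 1 q * cc 1 1 q := by
    intro q hq
    have z : ∀ i j : ℕ, 3 < i + j → (q.coeff j).coeff i = 0 := hdb q hq
    have z10 : (q.coeff 0).coeff 1 = 0 := h10 q hq
    have z01 : (q.coeff 1).coeff 0 = 0 := h01 q hq
    have z20 : (q.coeff 0).coeff 2 = 0 := h20 q hq
    have z02 : (q.coeff 2).coeff 0 = 0 := h02 q hq
    rw [cc_mul]
    norm_num [Finset.sum_range_succ, z, z10, z01, z20, z02]
  have hk := key 2 2
  rw [List.map_congr_left hfin, cc_Mz] at hk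
  norm_num at hk
  have hnn : (0:ℝ) ≤ (L.map fun a => (a.coeff 1).coeff 1 * (a.coeff 1).coeff 1).sum := by
    apply List.sum_nonneg
    intro x hx
    rw [List.mem_map] at hx
    obtain ⟨q, _, rfl⟩ := hx
    exact mul_self_nonneg _
  linarith
theorem IsSumSq.finsetSum {ι R : Type*} [AddCommMonoid R] [Mul R] (s : Finset ι) (f : ι → R)
    (h : ∀ i ∈ s, IsSumSq (f i)) : IsSumSq (∑ i ∈ s, f i) := by
  induction s using Finset.cons_induction with
  | empty => simpa using IsSumSq.zero
  | cons a t hat ih =>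
    rw [Finset.sum_cons]
    exact IsSumSq.add (h a (Finset.mem_cons_self a t))
      (ih fun i hi => h i (Finset.mem_cons_of_mem hi))

end MotzkinAux

open MvPolynomial

/-- The polynomial `u₁²u₂² + x₁²x₂u₂ + x₁x₂²u₁ - 3x₁x₂u₁u₂` (variables
`X 0 = x₁, X 1 = x₂, X 2 = u₁, X 3 = u₂`) has no preordering representation
`∑_{ν,μ} x₁^{ν₁}x₂^{ν₂}u₁^{μ₁}u₂^{μ₂} σ_{ν,μ}` with all `σ_{ν,μ}` sums of squares. -/
theorem no_preordering_representation :
    ¬ ∃ σ : Bool → Bool → Bool → Bool → MvPolynomial (Fin 4) ℝ,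
      (∀ ν₁ ν₂ μ₁ μ₂, IsSumSq (σ ν₁ ν₂ μ₁ μ₂)) ∧
      (X 2)^2 * (X 3)^2 + (X 0)^2 * (X 1) * (X 3) + (X 0) * (X 1)^2 * (X 2)
          - 3 * (X 0) * (X 1) * (X 2) * (X 3)
        = ∑ ν₁ : Bool, ∑ ν₂ : Bool, ∑ μ₁ : Bool, ∑ μ₂ : Bool,
            (if ν₁ then X 0 else 1) * (if ν₂ then X 1 else 1) *
            (if μ₁ then X 2 else 1) * (if μ₂ then X 3 else 1) * σ ν₁ ν₂ μ₁ μ₂ := by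
  rintro ⟨σ, hσ, heq⟩
  apply not_isSumSq_Mz
  classical
  let f : Fin 4 → Polynomial (Polynomial ℝ) :=
    ![Polynomial.C (Polynomial.X ^ 2), Polynomial.X ^ 2, 1, 1]
  let φ : MvPolynomial (Fin 4) ℝ →ₐ[ℝ] Polynomial (Polynomial ℝ) := MvPolynomial.aeval f
  have hsqf : ∀ k : Fin 4, IsSquare (f k) := by
    intro k
    fin_cases k
    · exact ⟨Polynomial.C Polynomial.X, by simp [f, sq, map_mul]⟩
    · exact ⟨Polynomial.X, by simp [f, sq]⟩
    · exact ⟨1, by simp [f]⟩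
    · exact ⟨1, by simp [f]⟩
  have hM : Mz = φ ((X 2)^2 * (X 3)^2 + (X 0)^2 * (X 1) * (X 3) + (X 0) * (X 1)^2 * (X 2)
      - 3 * (X 0) * (X 1) * (X 2) * (X 3)) := by
    simp only [φ, f, map_add, map_sub, map_mul, map_pow, map_ofNat, MvPolynomial.aeval_X,
      Matrix.cons_val_zero, Matrix.cons_val_one, Matrix.head_cons, Matrix.cons_val_two,
      Matrix.tail_cons, Matrix.cons_val_three, Mz]
    ring
  rw [hM, heq]
  simp only [map_sum, map_mul]
  refine IsSumSq.finsetSum _ _ fun ν₁ _ => IsSumSq.finsetSum _ _ fun ν₂ _ =>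
    IsSumSq.finsetSum _ _ fun μ₁ _ => IsSumSq.finsetSum _ _ fun μ₂ _ => ?_
  have hpref : ∀ (b : Bool) (k : Fin 4),
      IsSquare (φ (if b then (MvPolynomial.X k : MvPolynomial (Fin 4) ℝ) else 1)) := by
    intro b k
    cases b
    · simpa using (⟨1, by simp⟩ : IsSquare (1 : Polynomial (Polynomial ℝ)))
    · simpa [φ, MvPolynomial.aeval_X] using hsqf k
  have hσ' : IsSumSq (φ (σ ν₁ ν₂ μ₁ μ₂)) :=
    IsSumSq.ringHom_map (φ.toRingHom) (hσ ν₁ ν₂ μ₁ μ₂)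
  exact IsSumSq.square_mul
    ((((hpref ν₁ 0).mul (hpref ν₂ 1)).mul (hpref μ₁ 2)).mul (hpref μ₂ 3)) hσ'
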